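/- For any cograph G and any graph H, the domination number of the Cartesian product G □ H is at least γ(G)·γ(H). -/

import Mathlib

open SimpleGraph

/-- `S` is a dominating set of `G`. -/
def IsDomSet {V : Type*} (G : SimpleGraph V) (S : Set V) : Prop :=
  ∀ v : V, v ∈ S ∨ ∃ u ∈ S, G.Adj u v

/-- The domination number of a finite graph. -/
noncomputable def domNum {V : Type*} [Fintype V] (G : SimpleGraph V) : ℕ :=
  sInf {n | ∃ S : Finset V, IsDomSet G ↑S ∧ S.card = n}

/-- `Γ` is a minimum dominating set of `G`. -/
def IsMinDomSet {V : Type*} [Fintype V] (G : SimpleGraph V) (Γ : Finset V) : Prop :=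
  IsDomSet G ↑Γ ∧ Γ.card = domNum G

/-- `G` is a cograph: it has no induced `P₄`. -/
def IsCograph {V : Type*} (G : SimpleGraph V) : Prop :=
  ¬ ∃ f : Fin 4 ↪ V, ∀ a b : Fin 4, (pathGraph 4).Adj a b ↔ G.Adj (f a) (f b)

/-- `w` is a private neighbor of `v` with respect to `Γ`. -/
def PrivNbr {V : Type*} (G : SimpleGraph V) (Γ : Set V) (v w : V) : Prop :=
  w ∉ Γ ∧ G.Adj v w ∧ ∀ u ∈ Γ, G.Adj u w → u = v

/-- `w` is a shared neighbor of exactly `v₁` and `v₂` within `Γ`. -/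
def SharedNbr {V : Type*} (G : SimpleGraph V) (Γ : Set V) (v₁ v₂ w : V) : Prop :=
  w ∉ Γ ∧ ∀ u ∈ Γ, G.Adj u w ↔ (u = v₁ ∨ u = v₂)

section basic
variable {V : Type*} [Fintype V] (G : SimpleGraph V)

lemma domNum_le {S : Finset V} (h : IsDomSet G ↑S) : domNum G ≤ S.card :=
  Nat.sInf_le ⟨S, h, rfl⟩

lemma exists_minDom : ∃ S : Finset V, IsDomSet G ↑S ∧ S.card = domNum G := by
  have hne : {n | ∃ S : Finset V, IsDomSet G ↑S ∧ S.card = n}.Nonempty :=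
    ⟨(Finset.univ : Finset V).card, Finset.univ, fun v => Or.inl (by simp), rfl⟩
  exact Nat.sInf_mem hne

end basic

section p4
variable {V : Type*} {G : SimpleGraph V}

lemma IsCograph.no_p4 (hG : IsCograph G) {a b c d : V}
    (hab : G.Adj a b) (hbc : G.Adj b c) (hcd : G.Adj c d)
    (hac : ¬ G.Adj a c) (had : ¬ G.Adj a d) (hbd : ¬ G.Adj b d) : False := by
  have hac' : a ≠ c := by rintro rfl; exact had hcd
  have had' : a ≠ d := by rintro rfl; exact hac (G.adj_symm hcd)
  have hbd' : b ≠ d := by rintro rfl; exact had hab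
  have hab' : a ≠ b := G.ne_of_adj hab
  have hbc' : b ≠ c := G.ne_of_adj hbc
  have hcd' : c ≠ d := G.ne_of_adj hcd
  apply hG
  refine ⟨⟨![a, b, c, d], ?_⟩, ?_⟩
  · intro i j hij
    fin_cases i <;> fin_cases j <;>
      simp_all <;>
      first
        | rfl
        | exact absurd hij (by assumption)
        | exact absurd hij.symm (by assumption)
  · intro i j
    fin_cases i <;> fin_cases j <;>
      simp [pathGraph_adj, show ((3:Fin 4):ℕ) = 3 from rfl, show ((2:Fin 4):ℕ) = 2 from rfl,
            show ((1:Fin 4):ℕ) = 1 from rfl, show ((0:Fin 4):ℕ) = 0 from rfl] <;>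
      first
        | exact G.irrefl
        | exact hab | exact hbc | exact hcd
        | exact G.adj_symm hab | exact G.adj_symm hbc | exact G.adj_symm hcd
        | exact hac | exact had | exact hbd
        | exact fun h => hac (G.adj_symm h)
        | exact fun h => had (G.adj_symm h)
        | exact fun h => hbd (G.adj_symm h)

end p4

section reach
variable {V : Type*} {G : SimpleGraph V}

lemma IsCograph.reach_dist2 (hG : IsCograph G) {a v : V} (h : G.Reachable a v) :
    v = a ∨ G.Adj a v ∨ ∃ x, G.Adj a x ∧ G.Adj x v := by
  obtain ⟨p⟩ := h
  induction p with
  | nil => exact Or.inl rfl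
  | @cons a b v hadj p ih =>
    rcases ih with rfl | hbv | ⟨x, hbx, hxv⟩
    · exact Or.inr (Or.inl hadj)
    · exact Or.inr (Or.inr ⟨b, hadj, hbv⟩)
    · -- a ~ b, b ~ x, x ~ v
      by_cases hva : v = a
      · exact Or.inl hva
      by_cases hav : G.Adj a v
      · exact Or.inr (Or.inl hav)
      by_cases hax : G.Adj a x
      · exact Or.inr (Or.inr ⟨x, hax, hxv⟩)
      by_cases hbv : G.Adj b v
      · exact Or.inr (Or.inr ⟨b, hadj, hbv⟩)
      · exact absurd (hG.no_p4 hadj hbx hxv hax hav hbv) (by simp)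

end reach

section pairdom
variable {V : Type*} [Fintype V] {G : SimpleGraph V}

/-- In a cograph, every connected component is dominated by (at most) a pair of vertices. -/
lemma IsCograph.exists_pair_dom (hG : IsCograph G) (a : V) :
    ∃ b : V, ∀ v, G.Reachable a v → v = a ∨ G.Adj a v ∨ v = b ∨ G.Adj b v := by
  classical
  set R : Finset V := Finset.univ.filter
    (fun v => G.Reachable a v ∧ v ≠ a ∧ ¬ G.Adj a v) with hR
  by_cases hRe : R = ∅
  · refine ⟨a, fun v hv => ?_⟩
    by_cases h1 : v = a
    · exact Or.inl h1
    by_cases h2 : G.Adj a v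
    · exact Or.inr (Or.inl h2)
    · exfalso
      have hmem : v ∈ R := Finset.mem_filter.mpr ⟨Finset.mem_univ v, hv, h1, h2⟩
      simp [hRe] at hmem
  -- the set of neighbours of `a`
  have hRne : R.Nonempty := Finset.nonempty_of_ne_empty hRe
  set Na : Finset V := Finset.univ.filter (fun x => G.Adj a x) with hNa
  have hmemR : ∀ {r : V}, r ∈ R → G.Reachable a r ∧ r ≠ a ∧ ¬ G.Adj a r := by
    intro r hr; simpa [hR] using (Finset.mem_filter.mp hr).2
  -- every vertex of R has a neighbour in Na
  have hstep : ∀ {r : V}, r ∈ R → ∃ x, G.Adj a x ∧ G.Adj x r := by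
    intro r hr
    obtain ⟨hreach, hne, hnadj⟩ := hmemR hr
    rcases hG.reach_dist2 hreach with h | h | h
    · exact absurd h hne
    · exact absurd h hnadj
    · exact h
  have hNane : Na.Nonempty := by
    obtain ⟨r, hr⟩ := hRne
    obtain ⟨x, hax, _⟩ := hstep hr
    exact ⟨x, Finset.mem_filter.mpr ⟨Finset.mem_univ x, hax⟩⟩
  obtain ⟨b, hbNa, hbmax⟩ := Na.exists_max_image
    (fun x => (R.filter (fun r => G.Adj x r)).card) hNane
  have hab : G.Adj a b := (Finset.mem_filter.mp hbNa).2
  refine ⟨b, fun v hv => ?_⟩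
  by_cases h1 : v = a
  · exact Or.inl h1
  by_cases h2 : G.Adj a v
  · exact Or.inr (Or.inl h2)
  have hvR : v ∈ R := Finset.mem_filter.mpr ⟨Finset.mem_univ v, hv, h1, h2⟩
  by_cases h4 : G.Adj b v
  · exact Or.inr (Or.inr (Or.inr h4))
  -- derive a contradiction: v =: r2 is in R but not adjacent to b
  exfalso
  obtain ⟨b2, hab2, hb2v⟩ := hstep hvR
  have hb2Na : b2 ∈ Na := Finset.mem_filter.mpr ⟨Finset.mem_univ b2, hab2⟩
  have hbb2 : b ≠ b2 := by rintro rfl; exact h4 hb2v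
  -- every r1 ∈ R adjacent to b is adjacent to b2
  have hkey : ∀ r1 ∈ R.filter (fun r => G.Adj b r), G.Adj b2 r1 := by
    intro r1 hr1
    obtain ⟨hr1R, hbr1⟩ := Finset.mem_filter.mp hr1
    obtain ⟨_, hr1a, hr1na⟩ := hmemR hr1R
    by_contra hnb2r1
    have hr1b2 : ¬ G.Adj r1 b2 := fun h => hnb2r1 (G.adj_symm h)
    by_cases hcase : G.Adj b b2
    · -- case b ~ b2
      by_cases hr1r2 : G.Adj r1 v
      · -- P4 : a - b - r1 - v
        have hbv' : ¬ G.Adj b v := h4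
        have hanr1 : ¬ G.Adj a r1 := hr1na
        exact hG.no_p4 hab hbr1 hr1r2 hanr1 h2 hbv'
      · -- P4 : r1 - b - b2 - v
        exact hG.no_p4 (G.adj_symm hbr1) hcase hb2v hr1b2 hr1r2 h4
    · -- case ¬ b ~ b2 :  P4 : r1 - b - a - b2
      exact hG.no_p4 (G.adj_symm hbr1) (G.adj_symm hab) hab2 (fun h => hr1na (G.adj_symm h)) hr1b2 hcase
  -- so the neighbourhood of b2 in R is strictly larger
  have hsub : R.filter (fun r => G.Adj b r) ⊂ R.filter (fun r => G.Adj b2 r) := by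
    constructor
    · intro r1 hr1
      exact Finset.mem_filter.mpr ⟨(Finset.mem_filter.mp hr1).1, hkey r1 hr1⟩
    · intro hcon
      have : v ∈ R.filter (fun r => G.Adj b r) :=
        hcon (Finset.mem_filter.mpr ⟨hvR, hb2v⟩)
      exact h4 (Finset.mem_filter.mp this).2
  have := Finset.card_lt_card hsub
  have := hbmax b2 hb2Na
  omega

end pairdom

section PQ
variable {V : Type*} [Fintype V] {G : SimpleGraph V}

/-- In a component with no dominating vertex there is a "fair pair" (P, Q). -/
lemma exists_fair_pair (G : SimpleGraph V) (a : V)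
    (hnd : ∀ x, G.Reachable a x → ∃ u, G.Reachable a u ∧ u ≠ x ∧ ¬ G.Adj x u) :
    ∃ P Q : Finset V,
      (∀ x ∈ P, G.Reachable a x) ∧ (∀ x ∈ Q, G.Reachable a x) ∧
      P.Nonempty ∧ Q.Nonempty ∧ (∀ x ∈ P, x ∉ Q) ∧
      (∀ y ∈ Q, ∃ x ∈ P, ¬ G.Adj y x) ∧
      (∀ x ∈ P, ∃ y ∈ Q, ¬ G.Adj x y) ∧
      (∀ z, G.Reachable a z → z ∈ P ∨ z ∈ Q) := by
  classical
  set C : Finset (Finset V) := Finset.univ.filter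
    (fun P => P.Nonempty ∧ (∀ x ∈ P, G.Reachable a x) ∧
      (∀ x ∈ P, ∀ y ∈ P, x ≠ y → G.Adj x y)) with hC
  have hCne : C.Nonempty := by
    refine ⟨{a}, ?_⟩
    rw [hC, Finset.mem_filter]
    refine ⟨Finset.mem_univ _, Finset.singleton_nonempty a, ?_, ?_⟩
    · intro x hx; simp at hx; subst hx; exact Reachable.refl _
    · intro x hx y hy hxy; simp at hx hy; subst hx; subst hy; exact absurd rfl hxy
  obtain ⟨P, hPC, hPmax⟩ := C.exists_max_image (fun P => P.card) hCne
  obtain ⟨hPne, hPreach, hPclique⟩ := by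
    simpa [hC] using (Finset.mem_filter.mp hPC).2
  set Q : Finset V := Finset.univ.filter
    (fun v => G.Reachable a v ∧ v ∉ P ∧ ∃ x ∈ P, ¬ G.Adj x v) with hQ
  have hQmem : ∀ {v}, v ∈ Q ↔ (G.Reachable a v ∧ v ∉ P ∧ ∃ x ∈ P, ¬ G.Adj x v) := by
    intro v; simp [hQ]
  refine ⟨P, Q, hPreach, ?_, hPne, ?_, ?_, ?_, ?_, ?_⟩
  · intro x hx; exact (hQmem.mp hx).1
  · -- Q nonempty
    obtain ⟨x, hx⟩ := hPne
    obtain ⟨u, hur, hune, hnadj⟩ := hnd x (hPreach x hx)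
    have huP : u ∉ P := by
      intro huP
      exact hnadj (hPclique x hx u huP (fun h => hune h.symm))
    exact ⟨u, hQmem.mpr ⟨hur, huP, x, hx, hnadj⟩⟩
  · intro x hx hxQ; exact (hQmem.mp hxQ).2.1 hx
  · intro y hy
    obtain ⟨_, _, x, hxP, hnadj⟩ := hQmem.mp hy
    exact ⟨x, hxP, fun h => hnadj (G.adj_symm h)⟩
  · intro x hx
    obtain ⟨u, hur, hune, hnadj⟩ := hnd x (hPreach x hx)
    have huP : u ∉ P := by
      intro huP
      exact hnadj (hPclique x hx u huP (fun h => hune h.symm))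
    exact ⟨u, hQmem.mpr ⟨hur, huP, x, hx, hnadj⟩, hnadj⟩
  · -- the component is covered by P ∪ Q
    intro z hz
    by_contra hcon
    push_neg at hcon
    obtain ⟨hzP, hzQ⟩ := hcon
    have hall : ∀ x ∈ P, G.Adj x z := by
      intro x hxP
      by_contra hnadj
      exact hzQ (hQmem.mpr ⟨hz, hzP, x, hxP, hnadj⟩)
    have hbig : insert z P ∈ C := by
      refine Finset.mem_filter.mpr ⟨Finset.mem_univ _, ⟨z, Finset.mem_insert_self _ _⟩, ?_, ?_⟩
      · intro x hx
        rcases Finset.mem_insert.mp hx with rfl | hx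
        · exact hz
        · exact hPreach x hx
      · intro x hx y hy hxy
        rcases Finset.mem_insert.mp hx with rfl | hx'
        · rcases Finset.mem_insert.mp hy with rfl | hy'
          · exact absurd rfl hxy
          · exact G.adj_symm (hall y hy')
        · rcases Finset.mem_insert.mp hy with rfl | hy'
          · exact hall x hx'
          · exact hPclique x hx' y hy' hxy
    have hlt : P.card < (insert z P).card := by
      rw [Finset.card_insert_of_notMem hzP]; omega
    have := hPmax _ hbig
    omega

end PQ

section repstuff
variable {V : Type*} {G : SimpleGraph V}

/-- canonical representative of the connected component of a vertex -/
noncomputable def grep (G : SimpleGraph V) (v : V) : V :=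
  (G.connectedComponentMk v).out

lemma grep_reachable (G : SimpleGraph V) (v : V) : G.Reachable (grep G v) v := by
  have : G.connectedComponentMk (grep G v) = G.connectedComponentMk v :=
    (G.connectedComponentMk v).out_eq
  exact (SimpleGraph.ConnectedComponent.eq).mp this

lemma grep_eq_of_reachable {u v : V} (h : G.Reachable u v) : grep G u = grep G v := by
  unfold grep
  rw [SimpleGraph.ConnectedComponent.sound h]

lemma grep_idem (G : SimpleGraph V) (v : V) : grep G (grep G v) = grep G v :=
  grep_eq_of_reachable (grep_reachable G v)

lemma grep_eq_iff_reachable {r v : V} (hr : grep G r = r) :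
    grep G v = r ↔ G.Reachable r v := by
  constructor
  · intro h; exact h ▸ grep_reachable G v
  · intro h; rw [← grep_eq_of_reachable h, hr]

lemma grep_eq_of_adj {u v : V} (h : G.Adj u v) : grep G u = grep G v :=
  grep_eq_of_reachable h.reachable

end repstuff

section PH
variable {V W : Type*} [Fintype V] [Fintype W]

/-- the set of columns `w` in which `S × {w}` is occupied or fully horizontally dominated
from outside. -/
noncomputable def PHset (G : SimpleGraph V) (H : SimpleGraph W)
    (D : Finset (V × W)) (S : Finset V) : Finset W :=
  @Finset.filter _ (fun w =>
    (∃ u ∈ S, (u, w) ∈ D) ∨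
    (∀ u ∈ S, ∃ x, G.Adj x u ∧ x ∉ S ∧ (x, w) ∈ D)) (Classical.decPred _) Finset.univ

lemma mem_PHset {G : SimpleGraph V} {H : SimpleGraph W}
    {D : Finset (V × W)} {S : Finset V} {w : W} :
    w ∈ PHset G H D S ↔
      ((∃ u ∈ S, (u, w) ∈ D) ∨
       (∀ u ∈ S, ∃ x, G.Adj x u ∧ x ∉ S ∧ (x, w) ∈ D)) := by
  unfold PHset
  exact (@Finset.mem_filter _ _ (Classical.decPred _) _ _).trans
    (and_iff_right (Finset.mem_univ w))

lemma PHset_isDomSet (G : SimpleGraph V) (H : SimpleGraph W)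
    (D : Finset (V × W)) (hD : IsDomSet (G.boxProd H) ↑D) (S : Finset V) :
    IsDomSet H ↑(PHset G H D S) := by
  classical
  intro w
  by_cases hw : w ∈ PHset G H D S
  · exact Or.inl hw
  rw [mem_PHset] at hw
  push_neg at hw
  obtain ⟨hnc1, u, huS, hu⟩ := hw
  rcases hD (u, w) with hmem | ⟨p, hpD, hpadj⟩
  · exact (hnc1 u huS (Finset.mem_coe.mp hmem)).elim
  · obtain ⟨x, w'⟩ := p
    have hpD' : (x, w') ∈ D := Finset.mem_coe.mp hpD
    rcases (SimpleGraph.boxProd_adj).mp hpadj with ⟨hadjG, hw2⟩ | ⟨hadjH, hx⟩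
    · -- same column w' = w, G-adjacent
      simp only at hadjG hw2
      subst hw2
      by_cases hxS : x ∈ S
      · exact (hnc1 x hxS hpD').elim
      · exact (hu x hadjG hxS hpD').elim
    · -- same row, H-adjacent
      simp only at hadjH hx
      subst hx
      refine Or.inr ⟨w', ?_, hadjH⟩
      exact Finset.mem_coe.mpr (mem_PHset.mpr (Or.inl ⟨x, huS, hpD'⟩))

end PH

open Classical in
/-- classical indicator function of a proposition -/
noncomputable def cind (p : Prop) : ℕ := if p then 1 else 0

lemma cind_pos {p : Prop} (h : p) : cind p = 1 := by simp [cind, h]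

lemma cind_neg {p : Prop} (h : ¬ p) : cind p = 0 := by simp [cind, h]

lemma sum_cind_mem {W : Type*} [Fintype W] (s : Finset W) :
    ∑ w : W, cind (w ∈ s) = s.card := by
  classical
  calc ∑ w : W, cind (w ∈ s)
      = ∑ w : W, (if w ∈ s then 1 else 0) := by
        refine Finset.sum_congr rfl fun w _ => ?_
        by_cases h : w ∈ s
        · rw [cind_pos h, if_pos h]
        · rw [cind_neg h, if_neg h]
    _ = ∑ w ∈ Finset.univ.filter (· ∈ s), 1 := (Finset.sum_filter _ _).symm
    _ = (Finset.univ.filter (· ∈ s)).card := by rw [Finset.card_eq_sum_ones]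
    _ = s.card := by rw [Finset.filter_mem_eq_inter, Finset.univ_inter]

section package
variable {V W : Type*} [Fintype V] [Fintype W]

lemma component_package (G : SimpleGraph V) (H : SimpleGraph W)
    (hG : IsCograph G) (D : Finset (V × W)) (r : V) :
    ∃ (S1 S2 : Finset V) (n : ℕ) (dom : Finset V),
      (n = 1 ∨ n = 2) ∧
      dom.card ≤ n ∧
      (∀ v, G.Reachable r v → ∃ x ∈ dom, x = v ∨ G.Adj x v) ∧
      (∀ w : W,
        (cind (w ∈ PHset G H D S1) + (n - 1) * cind (w ∈ PHset G H D S2) : ℕ)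
          ≤ (@Finset.filter _ (fun v => (v, w) ∈ D ∧ G.Reachable r v)
              (Classical.decPred _) Finset.univ).card) := by
  classical
  by_cases hT : ∃ x, G.Reachable r x ∧ ∀ v, G.Reachable r v → x = v ∨ G.Adj x v
  · -- component with a dominating vertex c
    obtain ⟨c, hcr, hcdom⟩ := hT
    refine ⟨{c}, ∅, 1, {c}, Or.inl rfl, by simp, ?_, ?_⟩
    · intro v hv
      exact ⟨c, Finset.mem_singleton_self c, hcdom v hv⟩
    · intro w
      simp only [Nat.sub_self, zero_mul, add_zero]
      by_cases hw : w ∈ PHset G H D {c}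
      swap
      · rw [cind_neg hw]
        omega
      rw [cind_pos hw, Nat.one_le_iff_ne_zero, ← Nat.pos_iff_ne_zero, Finset.card_pos]
      rcases mem_PHset.mp hw with ⟨u, huS, huD⟩ | hext
      · have : u = c := Finset.mem_singleton.mp huS
        subst this
        exact ⟨u, (@Finset.mem_filter _ _ (Classical.decPred _) _ _).mpr
          ⟨Finset.mem_univ _, huD, hcr⟩⟩
      · obtain ⟨x, hxc, _, hxD⟩ := hext c (Finset.mem_singleton_self c)
        exact ⟨x, (@Finset.mem_filter _ _ (Classical.decPred _) _ _).mpr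
          ⟨Finset.mem_univ _, hxD, hcr.trans (G.adj_symm hxc).reachable⟩⟩
  · -- component with no dominating vertex
    push_neg at hT
    obtain ⟨b, hb⟩ := hG.exists_pair_dom r
    have hnd : ∀ x, G.Reachable r x → ∃ u, G.Reachable r u ∧ u ≠ x ∧ ¬ G.Adj x u := by
      intro x hx
      obtain ⟨v, hvr, hv⟩ := hT x hx
      exact ⟨v, hvr, Ne.symm hv.1, hv.2⟩
    obtain ⟨P, Q, hPreach, hQreach, hPne, hQne, hPQ, hA, hB, hcover⟩ :=
      exists_fair_pair G r hnd
    refine ⟨P, Q, 2, {r, b}, Or.inr rfl, Finset.card_insert_le r {b}, ?_, ?_⟩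
    · intro v hv
      rcases hb v hv with h | h | h | h
      · exact ⟨r, by simp, Or.inl h.symm⟩
      · exact ⟨r, by simp, Or.inr h⟩
      · exact ⟨b, by simp, Or.inl h.symm⟩
      · exact ⟨b, by simp, Or.inr h⟩
    · intro w
      set E : Finset V := @Finset.filter _ (fun v => (v, w) ∈ D ∧ G.Reachable r v)
        (Classical.decPred _) Finset.univ with hE
      have hEmem : ∀ {v}, v ∈ E ↔ ((v, w) ∈ D ∧ G.Reachable r v) := by
        intro v
        rw [hE]
        exact (@Finset.mem_filter _ _ (Classical.decPred _) _ _).trans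
          (and_iff_right (Finset.mem_univ v))
      set EP : Finset V := E.filter (fun v => v ∈ P) with hEP
      set EQ : Finset V := E.filter (fun v => v ∈ Q) with hEQ
      have hEPQ : EP.card + EQ.card ≤ E.card := by
        rw [← Finset.card_union_of_disjoint]
        · exact Finset.card_le_card (Finset.union_subset (Finset.filter_subset _ _)
            (Finset.filter_subset _ _))
        · rw [Finset.disjoint_left]
          intro x hx hx'
          exact hPQ x (Finset.mem_filter.mp hx).2 (Finset.mem_filter.mp hx').2
      have hfromP : w ∈ PHset G H D P →
          EP.Nonempty ∨ (∀ u ∈ P, ∃ x ∈ EQ, G.Adj x u) := by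
        intro hw
        rcases mem_PHset.mp hw with ⟨u, huP, huD⟩ | hext
        · exact Or.inl ⟨u, Finset.mem_filter.mpr
            ⟨hEmem.mpr ⟨huD, hPreach u huP⟩, huP⟩⟩
        · refine Or.inr fun u huP => ?_
          obtain ⟨x, hxu, hxP, hxD⟩ := hext u huP
          have hxr : G.Reachable r x := (hPreach u huP).trans (G.adj_symm hxu).reachable
          have hxQ : x ∈ Q := (hcover x hxr).resolve_left hxP
          exact ⟨x, Finset.mem_filter.mpr ⟨hEmem.mpr ⟨hxD, hxr⟩, hxQ⟩, hxu⟩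
      have hfromQ : w ∈ PHset G H D Q →
          EQ.Nonempty ∨ (∀ u ∈ Q, ∃ x ∈ EP, G.Adj x u) := by
        intro hw
        rcases mem_PHset.mp hw with ⟨u, huQ, huD⟩ | hext
        · exact Or.inl ⟨u, Finset.mem_filter.mpr
            ⟨hEmem.mpr ⟨huD, hQreach u huQ⟩, huQ⟩⟩
        · refine Or.inr fun u huQ => ?_
          obtain ⟨x, hxu, hxQ, hxD⟩ := hext u huQ
          have hxr : G.Reachable r x := (hQreach u huQ).trans (G.adj_symm hxu).reachable
          have hxP : x ∈ P := (hcover x hxr).resolve_right hxQ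
          exact ⟨x, Finset.mem_filter.mpr ⟨hEmem.mpr ⟨hxD, hxr⟩, hxP⟩, hxu⟩
      have key : cind (w ∈ PHset G H D P) + cind (w ∈ PHset G H D Q)
          ≤ EP.card + EQ.card := by
        by_cases h1 : w ∈ PHset G H D P <;> by_cases h2 : w ∈ PHset G H D Q
        · -- both
          rw [cind_pos h1, cind_pos h2]
          rcases hfromP h1 with hEPne | hTP <;> rcases hfromQ h2 with hEQne | hTQ
          · have c1 := Finset.card_pos.mpr hEPne
            have c2 := Finset.card_pos.mpr hEQne
            omega
          · -- EP nonempty, Q externally dominated into EP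
            by_cases hEQne : EQ.Nonempty
            · have c1 := Finset.card_pos.mpr hEPne
              have c2 := Finset.card_pos.mpr hEQne
              omega
            · have h2le : 2 ≤ EP.card := by
                by_contra hcon
                push_neg at hcon
                have h1le : EP.card = 1 := by
                  have := Finset.card_pos.mpr hEPne
                  omega
                obtain ⟨x0, hx0⟩ := Finset.card_eq_one.mp h1le
                have hx0P : x0 ∈ P := by
                  have : x0 ∈ EP := by rw [hx0]; exact Finset.mem_singleton_self x0
                  exact (Finset.mem_filter.mp this).2
                obtain ⟨y, hyQ, hny⟩ := hB x0 hx0P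
                obtain ⟨x, hxEP, hxy⟩ := hTQ y hyQ
                rw [hx0, Finset.mem_singleton] at hxEP
                subst hxEP
                exact hny hxy
              omega
          · -- EQ nonempty, P externally dominated into EQ
            by_cases hEPne : EP.Nonempty
            · have c1 := Finset.card_pos.mpr hEPne
              have c2 := Finset.card_pos.mpr hEQne
              omega
            · have h2le : 2 ≤ EQ.card := by
                by_contra hcon
                push_neg at hcon
                have h1le : EQ.card = 1 := by
                  have := Finset.card_pos.mpr hEQne
                  omega
                obtain ⟨y0, hy0⟩ := Finset.card_eq_one.mp h1le
                have hy0Q : y0 ∈ Q := by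
                  have : y0 ∈ EQ := by rw [hy0]; exact Finset.mem_singleton_self y0
                  exact (Finset.mem_filter.mp this).2
                obtain ⟨x, hxP, hnx⟩ := hA y0 hy0Q
                obtain ⟨y, hyEQ, hyx⟩ := hTP x hxP
                rw [hy0, Finset.mem_singleton] at hyEQ
                subst hyEQ
                exact hnx hyx
              omega
          · obtain ⟨u, huP⟩ := hPne
            obtain ⟨x, hxEQ, _⟩ := hTP u huP
            obtain ⟨u', hu'Q⟩ := hQne
            obtain ⟨x', hx'EP, _⟩ := hTQ u' hu'Q
            have c1 := Finset.card_pos.mpr ⟨x, hxEQ⟩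
            have c2 := Finset.card_pos.mpr ⟨x', hx'EP⟩
            omega
        · -- only P
          rw [cind_pos h1, cind_neg h2]
          rcases hfromP h1 with hEPne | hTP
          · have c1 := Finset.card_pos.mpr hEPne
            omega
          · obtain ⟨u, huP⟩ := hPne
            obtain ⟨x, hxEQ, _⟩ := hTP u huP
            have c1 := Finset.card_pos.mpr ⟨x, hxEQ⟩
            omega
        · -- only Q
          rw [cind_neg h1, cind_pos h2]
          rcases hfromQ h2 with hEQne | hTQ
          · have c1 := Finset.card_pos.mpr hEQne
            omega
          · obtain ⟨u, huQ⟩ := hQne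
            obtain ⟨x, hxEP, _⟩ := hTQ u huQ
            have c1 := Finset.card_pos.mpr ⟨x, hxEP⟩
            omega
        · rw [cind_neg h1, cind_neg h2]
          omega
      have : (2 - 1 : ℕ) * cind (w ∈ PHset G H D Q) = cind (w ∈ PHset G H D Q) := by
        norm_num
      rw [this]
      exact le_trans key hEPQ

end package


theorem cograph_vizing {V W : Type*} [Fintype V] [Fintype W]
    (G : SimpleGraph V) (H : SimpleGraph W) (hG : IsCograph G) :
    domNum (G.boxProd H) ≥ domNum G * domNum H := by
  classical
  rw [ge_iff_le]
  obtain ⟨D, hD, hDcard⟩ := exists_minDom (G.boxProd H)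
  rw [← hDcard]
  set reps : Finset V := Finset.univ.image (grep G) with hreps
  have hrep_fix : ∀ r ∈ reps, grep G r = r := by
    intro r hr
    obtain ⟨v, _, rfl⟩ := Finset.mem_image.mp hr
    exact grep_idem G v
  choose S1 S2 n dom hn hdomcard hdom hrow using
    (fun r : V => component_package G H hG D r)
  -- the union of the small dominating sets dominates G
  have hΓdom : IsDomSet G ↑(reps.biUnion dom) := by
    intro v
    have hv : grep G v ∈ reps := Finset.mem_image.mpr ⟨v, Finset.mem_univ v, rfl⟩
    obtain ⟨x, hx, hxv⟩ := hdom (grep G v) v (grep_reachable G v)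
    have hxΓ : x ∈ reps.biUnion dom := Finset.mem_biUnion.mpr ⟨grep G v, hv, hx⟩
    rcases hxv with rfl | hadj
    · exact Or.inl (Finset.mem_coe.mpr hxΓ)
    · exact Or.inr ⟨x, Finset.mem_coe.mpr hxΓ, hadj⟩
  have hG1 : domNum G ≤ ∑ r ∈ reps, n r := by
    refine le_trans (domNum_le G hΓdom) (le_trans Finset.card_biUnion_le ?_)
    exact Finset.sum_le_sum fun r _ => hdomcard r
  -- each row bundle gives at least n r copies of domNum H
  have hrH : ∀ r : V, n r * domNum H ≤
      ∑ w : W, (cind (w ∈ PHset G H D (S1 r)) +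
        (n r - 1) * cind (w ∈ PHset G H D (S2 r))) := by
    intro r
    have h1 : domNum H ≤ (PHset G H D (S1 r)).card :=
      domNum_le H (PHset_isDomSet G H D hD (S1 r))
    have h2 : domNum H ≤ (PHset G H D (S2 r)).card :=
      domNum_le H (PHset_isDomSet G H D hD (S2 r))
    rw [Finset.sum_add_distrib, ← Finset.mul_sum, sum_cind_mem, sum_cind_mem]
    rcases hn r with h | h <;> rw [h] <;> simp <;> omega
  -- row-wise counting
  have hDrow : ∀ w : W,
      (∑ r ∈ reps, (cind (w ∈ PHset G H D (S1 r)) +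
        (n r - 1) * cind (w ∈ PHset G H D (S2 r))))
        ≤ (D.filter (fun p => p.2 = w)).card := by
    intro w
    set Dw : Finset V := Finset.univ.filter (fun v => (v, w) ∈ D) with hDw
    have h1 : ∀ r ∈ reps, (cind (w ∈ PHset G H D (S1 r)) +
        (n r - 1) * cind (w ∈ PHset G H D (S2 r)))
          ≤ (Dw.filter (fun v => grep G v = r)).card := by
      intro r hr
      refine le_trans (hrow r w) (le_of_eq (congrArg Finset.card ?_))
      ext v
      rw [@Finset.mem_filter _ _ (Classical.decPred _), Finset.mem_filter,
        Finset.mem_filter]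
      constructor
      · rintro ⟨_, hvD, hvr⟩
        exact ⟨⟨Finset.mem_univ v, hvD⟩, (grep_eq_iff_reachable (hrep_fix r hr)).mpr hvr⟩
      · rintro ⟨⟨_, hvD⟩, hvr⟩
        exact ⟨Finset.mem_univ v, hvD, (grep_eq_iff_reachable (hrep_fix r hr)).mp hvr⟩
    calc ∑ r ∈ reps, (cind (w ∈ PHset G H D (S1 r)) +
          (n r - 1) * cind (w ∈ PHset G H D (S2 r)))
        ≤ ∑ r ∈ reps, (Dw.filter (fun v => grep G v = r)).card :=
          Finset.sum_le_sum h1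
      _ = Dw.card := by
          refine (Finset.card_eq_sum_card_fiberwise fun v _ => ?_).symm
          exact Finset.mem_image.mpr ⟨v, Finset.mem_univ v, rfl⟩
      _ = (D.filter (fun p => p.2 = w)).card := by
          refine Finset.card_bij' (fun v _ => (v, w)) (fun p _ => p.1) ?_ ?_ ?_ ?_
          · intro v hv
            exact Finset.mem_filter.mpr ⟨(Finset.mem_filter.mp hv).2, rfl⟩
          · intro p hp
            obtain ⟨hpD, hpw⟩ := Finset.mem_filter.mp hp
            refine Finset.mem_filter.mpr ⟨Finset.mem_univ _, ?_⟩
            rw [show ((p.1, w) : V × W) = p by rw [← hpw]]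
            exact hpD
          · intro v hv; rfl
          · intro p hp
            obtain ⟨_, hpw⟩ := Finset.mem_filter.mp hp
            show (p.1, w) = p
            rw [← hpw]
  -- final chain
  calc domNum G * domNum H
      ≤ (∑ r ∈ reps, n r) * domNum H := Nat.mul_le_mul_right _ hG1
    _ = ∑ r ∈ reps, n r * domNum H := Finset.sum_mul _ _ _
    _ ≤ ∑ r ∈ reps, ∑ w : W, (cind (w ∈ PHset G H D (S1 r)) +
          (n r - 1) * cind (w ∈ PHset G H D (S2 r))) :=
        Finset.sum_le_sum fun r _ => hrH r
    _ = ∑ w : W, ∑ r ∈ reps, (cind (w ∈ PHset G H D (S1 r)) +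
          (n r - 1) * cind (w ∈ PHset G H D (S2 r))) := Finset.sum_comm
    _ ≤ ∑ w : W, (D.filter (fun p => p.2 = w)).card :=
        Finset.sum_le_sum fun w _ => hDrow w
    _ = D.card := (Finset.card_eq_sum_card_fiberwise fun p _ => Finset.mem_univ p.2).symm
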